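/- Let A ∈ ℝ^{m×n}, b ∈ ℝ^m, let ℝ^m carry the Euclidean norm and ℝ^n an arbitrary norm ‖·‖, let X ⊆ ℝ^n be a convex set containing more than one point, let D(y,x) := (1/2)‖y − x‖², and let f(x) := (1/2)‖Ax − b‖₂². Then inf{L > 0 : D_f(y,x) ≤ L·D(y,x) for all x,y ∈ X} = ‖A|span(X−X)‖², where span(X−X) is the linear span of {x − y : x,y ∈ X}. -/

import Mathlib

noncomputable section
open scoped RealInnerProductSpace
open Set

def NCopy (n : ℕ) : Type := EuclideanSpace ℝ (Fin n)
instance (n : ℕ) : AddCommGroup (NCopy n) := inferInstanceAs (AddCommGroup (EuclideanSpace ℝ (Fin n)))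
instance (n : ℕ) : Module ℝ (NCopy n) := inferInstanceAs (Module ℝ (EuclideanSpace ℝ (Fin n)))

theorem aux_norm_bound {n : ℕ} (nn : EuclideanSpace ℝ (Fin n) → ℝ)
    (hnn0 : ∀ x, nn x = 0 ↔ x = 0)
    (hnn_add : ∀ x y, nn (x + y) ≤ nn x + nn y)
    (hnn_smul : ∀ (c : ℝ) (x : EuclideanSpace ℝ (Fin n)), nn (c • x) = |c| * nn x) :
    ∃ K : ℝ, 0 ≤ K ∧ ∀ x, ‖x‖ ≤ K * nn x := by
  letI : NormedAddCommGroup (NCopy n) := AddGroupNorm.toNormedAddCommGroup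
    { toFun := nn
      map_zero' := (hnn0 0).mpr rfl
      add_le' := hnn_add
      neg' := fun x => by have h := hnn_smul (-1) x; simp only [abs_neg, abs_one, one_mul] at h; rw [← h]; exact congrArg nn (neg_one_smul ℝ (x : EuclideanSpace ℝ (Fin n))).symm
      eq_zero_of_map_eq_zero' := fun x h => (hnn0 x).mp h }
  letI : NormedSpace ℝ (NCopy n) := ⟨fun c x => le_of_eq (hnn_smul c x)⟩
  letI : FiniteDimensional ℝ (NCopy n) :=
    inferInstanceAs (FiniteDimensional ℝ (EuclideanSpace ℝ (Fin n)))
  let T : NCopy n →ₗ[ℝ] EuclideanSpace ℝ (Fin n) :=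
    { toFun := fun x => x, map_add' := fun _ _ => rfl, map_smul' := fun _ _ => rfl }
  let T' := LinearMap.toContinuousLinearMap T
  refine ⟨‖T'‖, norm_nonneg _, fun x => ?_⟩
  exact T'.le_opNorm (show NCopy n from x)

theorem relative_smoothness_constant_of_least_squares {m n : ℕ}
    (A : EuclideanSpace ℝ (Fin n) →ₗ[ℝ] EuclideanSpace ℝ (Fin m))
    (b : EuclideanSpace ℝ (Fin m))
    (nn : EuclideanSpace ℝ (Fin n) → ℝ)
    (hnn0 : ∀ x, nn x = 0 ↔ x = 0)
    (hnn_add : ∀ x y, nn (x + y) ≤ nn x + nn y)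
    (hnn_smul : ∀ (c : ℝ) (x : EuclideanSpace ℝ (Fin n)), nn (c • x) = |c| * nn x)
    (X : Set (EuclideanSpace ℝ (Fin n))) (hX : Convex ℝ X) (hX2 : X.Nontrivial)
    (D : EuclideanSpace ℝ (Fin n) → EuclideanSpace ℝ (Fin n) → ℝ)
    (hD : ∀ y x, D y x = (1 / 2) * (nn (y - x)) ^ 2)
    (f : EuclideanSpace ℝ (Fin n) → ℝ)
    (hf : ∀ x, f x = (1 / 2) * ‖A x - b‖ ^ 2)
    (f' : EuclideanSpace ℝ (Fin n) → EuclideanSpace ℝ (Fin n))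
    (hf' : ∀ x, HasGradientAt f (f' x) x) :
    sInf {L : ℝ | 0 < L ∧ ∀ x ∈ X, ∀ y ∈ X,
        f y - f x - ⟪f' x, y - x⟫ ≤ L * D y x}
      = (sSup {r : ℝ | ∃ x ∈ (Submodule.span ℝ {d | ∃ u ∈ X, ∃ v ∈ X, d = u - v} :
          Set (EuclideanSpace ℝ (Fin n))), nn x ≤ 1 ∧ r = ‖A x‖}) ^ 2 := by
  obtain ⟨K, hK0, hK⟩ := aux_norm_bound nn hnn0 hnn_add hnn_smul
  have nn_neg : ∀ x, nn (-x) = nn x := fun x => by simpa using hnn_smul (-1) x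
  have nn_zero : nn 0 = 0 := (hnn0 0).mpr rfl
  have nn_nonneg : ∀ x, 0 ≤ nn x := by
    intro x
    have h := hnn_add x (-x)
    rw [add_neg_cancel, nn_zero, nn_neg] at h
    linarith
  let A' : EuclideanSpace ℝ (Fin n) →L[ℝ] EuclideanSpace ℝ (Fin m) :=
    LinearMap.toContinuousLinearMap A
  have hA' : ∀ x, A' x = A x := fun _ => rfl
  set Sp : Submodule ℝ (EuclideanSpace ℝ (Fin n)) :=
    Submodule.span ℝ {d | ∃ u ∈ X, ∃ v ∈ X, d = u - v} with hSp
  set R : Set ℝ := {r : ℝ | ∃ x ∈ (Sp : Set (EuclideanSpace ℝ (Fin n))), nn x ≤ 1 ∧ r = ‖A x‖}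
    with hR
  set M : ℝ := sSup R with hM
  -- key algebraic identity
  have hkey : ∀ x y, f y - f x - ⟪(LinearMap.adjoint A) (A x - b), y - x⟫
      = (1/2) * ‖A (y - x)‖^2 := by
    intro x y
    have h1 : A y - b = (A x - b) + A (y - x) := by rw [map_sub]; abel
    rw [hf, hf, h1, LinearMap.adjoint_inner_left, map_sub, @norm_add_sq_real]
    ring
  -- gradient identification
  have hgrad : ∀ x, f' x = (LinearMap.adjoint A) (A x - b) := by
    intro x
    refine (hf' x).unique ?_
    refine HasFDerivAtFilter.of_isLittleO ?_
    rw [Asymptotics.isLittleO_iff]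
    intro ε hε
    rw [Filter.prod_pure, Filter.eventually_map, Metric.eventually_nhds_iff]; dsimp only
    refine ⟨(2*ε)/(‖A'‖^2+1), by positivity, fun y hy => ?_⟩
    have h1 : ‖A' (y - x)‖ ≤ ‖A'‖ * ‖y - x‖ := A'.le_opNorm _
    rw [dist_eq_norm] at hy
    have h2 : f y - f x - (InnerProductSpace.toDual ℝ _ ((LinearMap.adjoint A) (A x - b))) (y - x)
        = (1/2) * ‖A' (y - x)‖^2 := by
      rw [InnerProductSpace.toDual_apply_apply, hA']; exact hkey x y
    rw [h2, Real.norm_eq_abs, abs_of_nonneg (by positivity)]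
    have h3 : ‖A' (y - x)‖^2 ≤ ‖A'‖^2 * ‖y - x‖^2 := by
      rw [← mul_pow]
      exact pow_le_pow_left₀ (norm_nonneg _) h1 2
    have h4 : ‖y - x‖ * (‖A'‖^2 + 1) < 2 * ε := by
      have := (lt_div_iff₀ (by positivity : (0:ℝ) < ‖A'‖^2 + 1)).mp hy
      linarith
    have h5 : ‖y - x‖ * (‖y - x‖ * (‖A'‖^2 + 1)) ≤ ‖y - x‖ * (2 * ε) :=
      mul_le_mul_of_nonneg_left h4.le (norm_nonneg _)
    nlinarith [sq_nonneg (‖y - x‖)]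
  have hxy : ∀ x y, f y - f x - ⟪f' x, y - x⟫ = (1/2) * ‖A (y - x)‖^2 := by
    intro x y; rw [hgrad x]; exact hkey x y
  -- basic facts about R
  have h0R : (0:ℝ) ∈ R := ⟨0, Submodule.zero_mem Sp, by rw [nn_zero]; norm_num, by simp⟩
  have hRbdd : BddAbove R := by
    refine ⟨‖A'‖ * K, fun r hr => ?_⟩
    obtain ⟨x, _, hx1, rfl⟩ := hr
    calc ‖A x‖ = ‖A' x‖ := by rw [hA']
      _ ≤ ‖A'‖ * ‖x‖ := A'.le_opNorm x
      _ ≤ ‖A'‖ * (K * nn x) := by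
          exact mul_le_mul_of_nonneg_left (hK x) (norm_nonneg _)
      _ ≤ ‖A'‖ * (K * 1) := by
          refine mul_le_mul_of_nonneg_left (mul_le_mul_of_nonneg_left hx1 hK0) (norm_nonneg _)
      _ = ‖A'‖ * K := by ring
  have hM0 : 0 ≤ M := le_csSup hRbdd h0R
  -- cone structure of the span
  have hspan : ∀ s ∈ Sp, ∃ t : ℝ, 0 ≤ t ∧ ∃ u ∈ X, ∃ v ∈ X, s = t • (u - v) := by
    intro s hs
    induction hs using Submodule.span_induction with
    | mem d hd =>
        obtain ⟨u, hu, v, hv, rfl⟩ := hd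
        exact ⟨1, zero_le_one, u, hu, v, hv, (one_smul _ _).symm⟩
    | zero =>
        obtain ⟨u, hu⟩ := hX2.nonempty
        exact ⟨0, le_rfl, u, hu, u, hu, (zero_smul ℝ _).symm⟩
    | add s1 s2 _ _ ih1 ih2 =>
        obtain ⟨t1, ht1, u1, hu1, v1, hv1, rfl⟩ := ih1
        obtain ⟨t2, ht2, u2, hu2, v2, hv2, rfl⟩ := ih2
        rcases eq_or_lt_of_le (add_nonneg ht1 ht2) with h0 | hpos
        · have ht1' : t1 = 0 := by linarith
          have ht2' : t2 = 0 := by linarith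
          exact ⟨0, le_rfl, u1, hu1, u1, hu1, by simp [ht1', ht2']⟩
        · set t := t1 + t2 with htdef
          have htpos : 0 < t := hpos
          set a := t1 / t with ha
          set c := t2 / t with hc
          have ht0 : t ≠ 0 := ne_of_gt htpos
          have hab : a + c = 1 := by
            rw [ha, hc, ← add_div]
            field_simp; exact htdef.symm
          have ha0 : 0 ≤ a := div_nonneg ht1 htpos.le
          have hc0 : 0 ≤ c := div_nonneg ht2 htpos.le
          refine ⟨t, htpos.le, a • u1 + c • u2, hX hu1 hu2 ha0 hc0 hab,
            a • v1 + c • v2, hX hv1 hv2 ha0 hc0 hab, ?_⟩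
          have hta : t * a = t1 := by rw [ha, mul_comm]; exact div_mul_cancel₀ t1 ht0
          have htc : t * c = t2 := by rw [hc, mul_comm]; exact div_mul_cancel₀ t2 ht0
          rw [← hta, ← htc]
          module
    | smul c s _ ih =>
        obtain ⟨t, ht, u, hu, v, hv, rfl⟩ := ih
        rcases le_or_gt 0 c with hc | hc
        · exact ⟨c * t, mul_nonneg hc ht, u, hu, v, hv, smul_smul c t _⟩
        · refine ⟨(-c) * t, mul_nonneg (by linarith) ht, v, hv, u, hu, ?_⟩
          rw [smul_smul]
          module
  -- upper bound on the span
  have hMle : ∀ s ∈ Sp, ‖A s‖ ≤ M * nn s := by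
    intro s hs
    rcases eq_or_ne (nn s) 0 with h0 | h0
    · have hs0 : s = 0 := (hnn0 s).mp h0
      subst hs0
      simp [nn_zero]
    · have hpos : 0 < nn s := lt_of_le_of_ne (nn_nonneg s) (Ne.symm h0)
      have hw : ((nn s)⁻¹ • s) ∈ (Sp : Set (EuclideanSpace ℝ (Fin n))) := Submodule.smul_mem Sp _ hs
      have hw1 : nn ((nn s)⁻¹ • s) ≤ 1 := by
        rw [hnn_smul, abs_of_nonneg (inv_nonneg.mpr hpos.le), inv_mul_cancel₀ h0]
      have hmem : ‖A ((nn s)⁻¹ • s)‖ ∈ R := ⟨_, hw, hw1, rfl⟩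
      have := le_csSup hRbdd hmem
      rw [map_smul, norm_smul, Real.norm_eq_abs, abs_of_nonneg (inv_nonneg.mpr hpos.le)] at this
      calc ‖A s‖ = nn s * ((nn s)⁻¹ * ‖A s‖) := by field_simp
        _ ≤ nn s * M := mul_le_mul_of_nonneg_left this hpos.le
        _ = M * nn s := mul_comm _ _
  -- membership of L ≥ M^2 + ε
  have hin : ∀ ε : ℝ, 0 < ε → (M^2 + ε) ∈ {L : ℝ | 0 < L ∧ ∀ x ∈ X, ∀ y ∈ X,
      f y - f x - ⟪f' x, y - x⟫ ≤ L * D y x} := by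
    intro ε hε
    refine ⟨by positivity, fun x hx y hy => ?_⟩
    rw [hxy, hD]
    have hmem : y - x ∈ Sp := Submodule.subset_span ⟨y, hy, x, hx, rfl⟩
    have h1 := hMle _ hmem
    nlinarith [norm_nonneg (A (y - x)), nn_nonneg (y - x)]
  -- every L in the set is ≥ M^2
  have hub : ∀ L ∈ {L : ℝ | 0 < L ∧ ∀ x ∈ X, ∀ y ∈ X,
      f y - f x - ⟪f' x, y - x⟫ ≤ L * D y x}, M^2 ≤ L := by
    rintro L ⟨hL0, hL⟩
    have hdiff : ∀ u ∈ X, ∀ v ∈ X, ‖A (u - v)‖^2 ≤ L * nn (u - v)^2 := by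
      intro u hu v hv
      have := hL v hv u hu
      rw [hxy, hD] at this
      linarith
    have hsp : ∀ s ∈ Sp, ‖A s‖^2 ≤ L * nn s^2 := by
      intro s hs
      obtain ⟨t, ht, u, hu, v, hv, rfl⟩ := hspan s hs
      have h1 := hdiff u hu v hv
      have h2 : ‖A (t • (u - v))‖ = t * ‖A (u - v)‖ := by
        rw [map_smul, norm_smul, Real.norm_eq_abs, abs_of_nonneg ht]
      have h3 : nn (t • (u - v)) = t * nn (u - v) := by
        rw [hnn_smul, abs_of_nonneg ht]
      rw [h2, h3, mul_pow, mul_pow]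
      nlinarith [sq_nonneg t, nn_nonneg (u - v)]
    have hMs : M ≤ Real.sqrt L := by
      refine csSup_le ⟨0, h0R⟩ (fun r hr => ?_)
      obtain ⟨x, hxSp, hx1, rfl⟩ := hr
      have h1 := hsp x hxSp
      have h2 : nn x ^ 2 ≤ 1 := by nlinarith [nn_nonneg x]
      have h3 : ‖A x‖^2 ≤ L := by nlinarith
      nlinarith [Real.sq_sqrt hL0.le, Real.sqrt_nonneg L, norm_nonneg (A x),
        sq_nonneg (‖A x‖ - Real.sqrt L), sq_nonneg (‖A x‖ + Real.sqrt L)]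
    calc M^2 ≤ (Real.sqrt L)^2 := by nlinarith [Real.sqrt_nonneg L]
      _ = L := Real.sq_sqrt hL0.le
  -- conclude
  have h1 : M^2 ≤ sInf {L : ℝ | 0 < L ∧ ∀ x ∈ X, ∀ y ∈ X,
      f y - f x - ⟪f' x, y - x⟫ ≤ L * D y x} :=
    le_csInf ⟨M^2 + 1, hin 1 one_pos⟩ hub
  have h2 : sInf {L : ℝ | 0 < L ∧ ∀ x ∈ X, ∀ y ∈ X,
      f y - f x - ⟪f' x, y - x⟫ ≤ L * D y x} ≤ M^2 := by
    refine le_of_forall_pos_le_add (fun ε hε => ?_)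
    exact csInf_le ⟨M^2, hub⟩ (hin ε hε)
  linarith
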